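/- Consider the mini-batch stochastic Krasnosel'skiĭ–Mann iteration x_{k+1} = (1 - α_k)x_k + α_k T_ξ̄_k(x_k) with α_k ∈ (0,1), where T_ξ̄_k is unbiased for a nonexpansive mapping T with conditional variance at most σ²/b_k. Then for every fixed point x* of T: E[‖x_{k+1} - x*‖² | past] ≤ ‖x_k - x*‖² + σ²α_k/b_k - α_k(1 - α_k)‖x_k - T(x_k)‖². -/

import Mathlib

open Finset

lemma convex_norm_sq_identity {E : Type*} [NormedAddCommGroup E] [InnerProductSpace ℝ E]
    (u v : E) (α : ℝ) :
    ‖(1-α)•u + α•v‖^2 = (1-α)*‖u‖^2 + α*‖v‖^2 - α*(1-α)*‖u-v‖^2 := by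
  have h : ∀ w : E, ‖w‖^2 = inner ℝ w w := fun w => (real_inner_self_eq_norm_sq w).symm
  rw [h, h, h, h]
  simp only [inner_add_add_self, inner_sub_sub_self, real_inner_smul_left,
    real_inner_smul_right]
  ring

lemma bias_variance {E : Type*} [NormedAddCommGroup E] [InnerProductSpace ℝ E]
    {Ω : Type*} [Fintype Ω] (q : Ω → ℝ) (hq1 : ∑ ω, q ω = 1)
    (v : Ω → E) (m c : E) (hm : ∑ ω, q ω • v ω = m) :
    ∑ ω, q ω * ‖v ω - c‖^2 = (∑ ω, q ω * ‖v ω - m‖^2) + ‖c - m‖^2 := by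
  have key : ∀ ω, q ω * ‖v ω - c‖^2
      = q ω * ‖v ω - m‖^2 + 2 * inner ℝ (q ω • (v ω - m)) (m - c) + q ω * ‖m - c‖^2 := by
    intro ω
    have h : ∀ w : E, ‖w‖^2 = inner ℝ w w := fun w => (real_inner_self_eq_norm_sq w).symm
    have : v ω - c = (v ω - m) + (m - c) := by abel
    rw [this, h, h (v ω - m), h (m - c)]
    simp only [inner_add_add_self, real_inner_smul_left]
    rw [real_inner_comm (m - c) (v ω - m)]
    ring
  rw [Finset.sum_congr rfl (fun ω _ => key ω)]
  rw [Finset.sum_add_distrib, Finset.sum_add_distrib]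
  have h1 : ∑ ω, 2 * inner ℝ (q ω • (v ω - m)) (m - c) = (0:ℝ) := by
    rw [← Finset.mul_sum, ← sum_inner]
    have : ∑ ω, q ω • (v ω - m) = 0 := by
      simp only [smul_sub, Finset.sum_sub_distrib, hm, ← Finset.sum_smul, hq1, one_smul,
        sub_self]
    rw [this, inner_zero_left, mul_zero]
  have h2 : ∑ ω, q ω * ‖m - c‖^2 = ‖c - m‖^2 := by
    rw [← Finset.sum_mul, hq1, one_mul, norm_sub_rev]
  rw [h1, h2, add_zero]

/-- One-step descent inequality of the mini-batch stochastic Krasnosel'skiĭ–Mann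
iteration. `U ω` stands for `T_ξ̄ₖ(xₖ)`, with outcomes `ω` of probability `q ω`;
the conditional expectation given the past is the sum `∑ ω, q ω * ·`. -/
theorem km_one_step_descent
    {d : ℕ} {Ω : Type*} [Fintype Ω]
    (T : EuclideanSpace ℝ (Fin d) → EuclideanSpace ℝ (Fin d))
    (hT : ∀ x y, ‖T x - T y‖ ≤ ‖x - y‖)
    (q : Ω → ℝ) (hq : ∀ ω, 0 ≤ q ω) (hq1 : ∑ ω, q ω = 1)
    (xk : EuclideanSpace ℝ (Fin d)) (U : Ω → EuclideanSpace ℝ (Fin d))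
    (hunb : ∑ ω, q ω • U ω = T xk)
    (σ bk : ℝ) (hbk : 0 < bk)
    (hvar : ∑ ω, q ω * ‖U ω - T xk‖ ^ 2 ≤ σ ^ 2 / bk)
    (α : ℝ) (hα : α ∈ Set.Ioo (0 : ℝ) 1)
    (xnext : Ω → EuclideanSpace ℝ (Fin d))
    (hx : ∀ ω, xnext ω = (1 - α) • xk + α • U ω)
    (xs : EuclideanSpace ℝ (Fin d)) (hxs : T xs = xs) :
    ∑ ω, q ω * ‖xnext ω - xs‖ ^ 2
      ≤ ‖xk - xs‖ ^ 2 + σ ^ 2 * α / bk - α * (1 - α) * ‖xk - T xk‖ ^ 2 := by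
  obtain ⟨hα0, hα1⟩ := hα
  set V := ∑ ω, q ω * ‖U ω - T xk‖ ^ 2 with hV
  have hV0 : 0 ≤ V := Finset.sum_nonneg fun ω _ =>
    mul_nonneg (hq ω) (sq_nonneg _)
  -- pointwise identity
  have hpt : ∀ ω, ‖xnext ω - xs‖^2
      = (1-α)*‖xk - xs‖^2 + α*‖U ω - xs‖^2 - α*(1-α)*‖U ω - xk‖^2 := by
    intro ω
    have : xnext ω - xs = (1-α)•(xk - xs) + α•(U ω - xs) := by
      rw [hx ω]; rw [smul_sub, smul_sub]
      have : (1-α)•xs + α•xs = xs := by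
        rw [← add_smul]; ring_nf; exact one_smul ℝ xs
      module
    rw [this, convex_norm_sq_identity]
    congr 2
    · rw [show (xk - xs) - (U ω - xs) = xk - U ω by abel, norm_sub_rev]
  have hsum : ∑ ω, q ω * ‖xnext ω - xs‖^2
      = (1-α)*‖xk-xs‖^2 + α*(V + ‖xs - T xk‖^2) - α*(1-α)*(V + ‖xk - T xk‖^2) := by
    have e1 : ∑ ω, q ω * ‖U ω - xs‖^2 = V + ‖xs - T xk‖^2 :=
      bias_variance q hq1 U (T xk) xs hunb
    have e2 : ∑ ω, q ω * ‖U ω - xk‖^2 = V + ‖xk - T xk‖^2 :=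
      bias_variance q hq1 U (T xk) xk hunb
    calc ∑ ω, q ω * ‖xnext ω - xs‖^2
        = ∑ ω, (q ω * ((1-α)*‖xk - xs‖^2) + q ω * (α*‖U ω - xs‖^2)
            - q ω * (α*(1-α)*‖U ω - xk‖^2)) := by
          apply Finset.sum_congr rfl; intro ω _; rw [hpt ω]; ring
      _ = (1-α)*‖xk-xs‖^2 + α*(V + ‖xs - T xk‖^2) - α*(1-α)*(V + ‖xk - T xk‖^2) := by
          rw [Finset.sum_sub_distrib, Finset.sum_add_distrib]
          have s1 : ∑ ω, q ω * ((1-α)*‖xk - xs‖^2) = (1-α)*‖xk-xs‖^2 := by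
            rw [← Finset.sum_mul, hq1, one_mul]
          have s2 : ∑ ω, q ω * (α*‖U ω - xs‖^2) = α * ∑ ω, q ω * ‖U ω - xs‖^2 := by
            rw [Finset.mul_sum]; exact Finset.sum_congr rfl fun ω _ => by ring
          have s3 : ∑ ω, q ω * (α*(1-α)*‖U ω - xk‖^2)
              = α*(1-α) * ∑ ω, q ω * ‖U ω - xk‖^2 := by
            rw [Finset.mul_sum]; exact Finset.sum_congr rfl fun ω _ => by ring
          rw [s1, s2, s3, e1, e2]
  -- nonexpansiveness
  have hne : ‖xs - T xk‖ ≤ ‖xk - xs‖ := by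
    have := hT xk xs
    rw [hxs] at this
    rw [norm_sub_rev] at this
    exact this
  have hne2 : ‖xs - T xk‖^2 ≤ ‖xk - xs‖^2 := by
    have h0 : 0 ≤ ‖xs - T xk‖ := norm_nonneg _
    nlinarith
  rw [hsum]
  have h1 : α * α * V ≤ α * V := by nlinarith [mul_nonneg (mul_nonneg hα0.le hV0) (sub_pos.mpr hα1).le]
  have hv2 : α * V ≤ σ ^ 2 * α / bk := by
    have h := mul_le_mul_of_nonneg_left hvar hα0.le
    have : α * (σ ^ 2 / bk) = σ ^ 2 * α / bk := by ring
    linarith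
  have h3 := mul_le_mul_of_nonneg_left hne2 hα0.le
  nlinarith
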